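/- Under the same setting (CEMPT $T$ on an infinite $\sigma$-finite measure space, $Y$ of finite positive measure, $\varphi$ the first return time, $S_n^Y=\sum_{k=1}^n 1_Y\circ T^k$, $Q^Y(s)=\sum_{n\ge0}e^{-ns}\mu(Y\cap\{\varphi>n\})$): for $s_1>0$ and $s_2\ge0$, $(1-e^{-s_2})\int_Y\sum_{n\ge0}e^{-ns_1}e^{-s_2S_n^Y}\,d\mu + (1-e^{-s_1})e^{-s_2}\int_Y\big(\sum_{n\ge0}e^{-ns_1}e^{-s_2S_n^Y}\big)\big(\sum_{n\ge0}e^{-ns_1}\hat T^n 1_{Y_n}\big)\,d\mu = Q^Y(s_1)$. -/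

import Mathlib

open MeasureTheory Filter Real Set
open scoped Topology ENNReal

/-- First return time to `Y` (value `⊤` if the orbit never returns). -/
noncomputable def firstReturn {X : Type*} (T : X → X) (Y : Set X) (x : X) : ℕ∞ :=
  ⨅ (k : ℕ) (_ : 1 ≤ k ∧ T^[k] x ∈ Y), (k : ℕ∞)

/-- The sets `Y₀ = Y`, `Yₙ = Yᶜ ∩ {φ = n}`. -/
noncomputable def Ypart {X : Type*} (T : X → X) (Y : Set X) : ℕ → Set X
  | 0 => Y
  | (n+1) => Yᶜ ∩ {x | firstReturn T Y x = ((n+1 : ℕ) : ℕ∞)}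

/-- Laplace transform `Q^Y(s)` of the increments of the wandering rate. -/
noncomputable def QY {X : Type*} [MeasurableSpace X] (T : X → X) (Y : Set X)
    (μ : Measure X) (s : ℝ) : ℝ≥0∞ :=
  ∑' n : ℕ, ENNReal.ofReal (Real.exp (-(n : ℝ) * s)) *
    μ (Y ∩ {x | (n : ℕ∞) < firstReturn T Y x})

/-- Occupation time of `Y` by the orbit between times `1` and `n`. -/
noncomputable def occTime {X : Type*} (T : X → X) (A : Set X) (n : ℕ) (x : X) : ℕ :=
  ∑ k ∈ Finset.Icc 1 n, A.indicator (fun _ => (1:ℕ)) (T^[k] x)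


section FR
variable {X : Type*} {T : X → X} {Y : Set X} {x : X}

lemma firstReturn_le {k : ℕ} (h1 : 1 ≤ k) (h2 : T^[k] x ∈ Y) :
    firstReturn T Y x ≤ (k : ℕ∞) :=
  iInf_le_of_le k (iInf_le_of_le ⟨h1, h2⟩ le_rfl)

lemma le_firstReturn (m : ℕ) (h : ∀ k, 1 ≤ k → k < m → T^[k] x ∉ Y) :
    (m : ℕ∞) ≤ firstReturn T Y x := by
  refine le_iInf fun k => le_iInf fun hk => ?_
  have : m ≤ k := by
    by_contra hc
    exact h k hk.1 (not_le.1 hc) hk.2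
  exact_mod_cast this

lemma firstReturn_pos : 0 < firstReturn T Y x := by
  have h := le_firstReturn (T := T) (Y := Y) (x := x) 1 (by omega)
  exact lt_of_lt_of_le (by norm_num) h

lemma firstReturn_le_iff {j : ℕ} :
    firstReturn T Y x ≤ (j : ℕ∞) ↔ ∃ k, 1 ≤ k ∧ k ≤ j ∧ T^[k] x ∈ Y := by
  constructor
  · intro h
    by_contra hc
    push_neg at hc
    have h2 := le_firstReturn (T := T) (Y := Y) (x := x) (j+1)
      (fun k hk1 hk2 => hc k hk1 (by omega))
    have : ((j+1 : ℕ) : ℕ∞) ≤ (j : ℕ∞) := le_trans h2 h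
    exact absurd (by exact_mod_cast this) (by omega)
  · rintro ⟨k, h1, h2, h3⟩
    exact le_trans (firstReturn_le h1 h3) (by exact_mod_cast h2)

lemma firstReturn_eq_iff {n : ℕ} (hn : 1 ≤ n) :
    firstReturn T Y x = (n : ℕ∞) ↔
      T^[n] x ∈ Y ∧ ∀ k, 1 ≤ k → k < n → T^[k] x ∉ Y := by
  constructor
  · intro h
    have hnot : ∀ k, 1 ≤ k → k < n → T^[k] x ∉ Y := by
      intro k hk1 hk2 hky
      have := firstReturn_le (x := x) hk1 hky
      rw [h] at this
      exact absurd (by exact_mod_cast this) (by omega)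
    refine ⟨?_, hnot⟩
    obtain ⟨k, h1, h2, h3⟩ := firstReturn_le_iff.1 h.le
    rcases lt_or_eq_of_le h2 with h4 | h4
    · exact absurd h3 (hnot k h1 h4)
    · rwa [h4] at h3
  · rintro ⟨h1, h2⟩
    exact le_antisymm (firstReturn_le hn h1) (le_firstReturn n h2)

lemma mem_Ypart_succ {n : ℕ} :
    x ∈ Ypart T Y (n+1) ↔
      x ∉ Y ∧ T^[n+1] x ∈ Y ∧ ∀ k, k ≤ n → T^[k] x ∉ Y := by
  simp only [Ypart, Set.mem_inter_iff, Set.mem_compl_iff, Set.mem_setOf_eq,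
    firstReturn_eq_iff (by omega : 1 ≤ n+1)]
  constructor
  · rintro ⟨h0, h1, h2⟩
    refine ⟨h0, h1, fun k hk => ?_⟩
    rcases Nat.eq_zero_or_pos k with rfl | hk1
    · simpa using h0
    · exact h2 k hk1 (by omega)
  · rintro ⟨h0, h1, h2⟩
    exact ⟨h0, h1, fun k hk1 hk2 => h2 k (by omega)⟩

lemma Ypart_subset_iter_preimage (n : ℕ) : Ypart T Y n ⊆ T^[n] ⁻¹' Y := by
  rcases n with _ | n
  · intro x hx; simpa [Ypart] using hx
  · intro x hx
    exact (mem_Ypart_succ.1 hx).2.1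

lemma measurableSet_firstReturn_eq [MeasurableSpace X] (hT : Measurable T)
    (hY : MeasurableSet Y) {n : ℕ} (hn : 1 ≤ n) :
    MeasurableSet {x | firstReturn T Y x = (n : ℕ∞)} := by
  have : {x | firstReturn T Y x = (n : ℕ∞)} =
      (T^[n] ⁻¹' Y) ∩ ⋂ (k : ℕ), ⋂ (_ : 1 ≤ k ∧ k < n), (T^[k] ⁻¹' Y)ᶜ := by
    ext x
    simp only [firstReturn_eq_iff hn, Set.mem_inter_iff, Set.mem_preimage,
      Set.mem_iInter, Set.mem_compl_iff, Set.mem_setOf_eq]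
    tauto
  rw [this]
  exact ((hY.preimage (hT.iterate n)).inter
    (MeasurableSet.iInter fun k => MeasurableSet.iInter fun _ =>
      (hY.preimage (hT.iterate k)).compl))

lemma measurableSet_Ypart [MeasurableSpace X] (hT : Measurable T)
    (hY : MeasurableSet Y) (n : ℕ) : MeasurableSet (Ypart T Y n) := by
  rcases n with _ | n
  · exact hY
  · exact hY.compl.inter (measurableSet_firstReturn_eq hT hY (by omega))

lemma Ypart_disjoint {m n : ℕ} (h : m ≠ n) :
    Disjoint (Ypart T Y m) (Ypart T Y n) := by
  rw [Set.disjoint_left]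
  intro x hm hn
  rcases m with _ | m <;> rcases n with _ | n
  · omega
  · exact (mem_Ypart_succ.1 hn).1 hm
  · exact (mem_Ypart_succ.1 hm).1 hn
  · have h1 := ((Set.mem_inter_iff _ _ _).1 hm).2
    have h2 := ((Set.mem_inter_iff _ _ _).1 hn).2
    simp only [Set.mem_setOf_eq] at h1 h2
    rw [h1] at h2
    exact h (by exact_mod_cast h2)

end FR



section OT
variable {X : Type*} {T : X → X} {Y : Set X} {x : X}

lemma occTime_zero : occTime T Y 0 x = 0 := by simp [occTime]

lemma occTime_one : occTime T Y 1 x = Y.indicator (fun _ => (1:ℕ)) (T x) := by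
  simp [occTime]

lemma occTime_add (n m : ℕ) :
    occTime T Y (n + m) x = occTime T Y n x + occTime T Y m (T^[n] x) := by
  unfold occTime
  have h1 : Finset.Icc 1 (n+m) = Finset.Ioc 0 (n+m) := by
    ext k; simp [Nat.lt_iff_add_one_le]
  have h2 : Finset.Icc 1 n = Finset.Ioc 0 n := by
    ext k; simp [Nat.lt_iff_add_one_le]
  have h3 : Finset.Icc 1 m = Finset.Ioc 0 m := by
    ext k; simp [Nat.lt_iff_add_one_le]
  rw [h1, h2, h3, ← Finset.sum_Ioc_consecutive _ (Nat.zero_le n) (Nat.le_add_right n m)]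
  congr 1
  rw [show Finset.Ioc n (n+m) = Finset.map ⟨fun k => k + n, add_left_injective n⟩ (Finset.Ioc 0 m) by
    ext k; simp [Finset.mem_map]; constructor
    · intro ⟨h4, h5⟩; exact ⟨k - n, by omega, by omega⟩
    · rintro ⟨a, ⟨ha1, ha2⟩, rfl⟩; omega]
  rw [Finset.sum_map]
  refine Finset.sum_congr rfl fun k _ => ?_
  simp [Function.iterate_add_apply]

lemma occTime_eq_zero (n : ℕ) (h : ∀ k, 1 ≤ k → k ≤ n → T^[k] x ∉ Y) :
    occTime T Y n x = 0 := by
  unfold occTime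
  refine Finset.sum_eq_zero fun k hk => ?_
  rw [Finset.mem_Icc] at hk
  simp [Set.indicator_of_notMem (h k hk.1 hk.2)]

lemma occTime_succ' (j : ℕ) :
    occTime T Y (j+1) x = Y.indicator (fun _ => (1:ℕ)) (T x) + occTime T Y j (T x) := by
  rw [show j + 1 = 1 + j by omega, occTime_add, occTime_one]
  rfl

lemma measurable_occTime [MeasurableSpace X] (hT : Measurable T) (hY : MeasurableSet Y)
    (n : ℕ) : Measurable fun x => occTime T Y n x := by
  unfold occTime
  refine Finset.measurable_sum _ fun k _ => ?_
  exact (measurable_const.indicator hY).comp (hT.iterate k)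

end OT

lemma ofReal_exp_neg_nat_mul (s : ℝ) (n : ℕ) :
    ENNReal.ofReal (Real.exp (-(n : ℝ) * s)) = (ENNReal.ofReal (Real.exp (-s)))^n := by
  rw [show -(n:ℝ) * s = (n:ℝ) * (-s) by ring, Real.exp_nat_mul,
    ENNReal.ofReal_pow (Real.exp_nonneg _)]

lemma ofReal_exp_neg_mul_nat (s : ℝ) (k : ℕ) :
    ENNReal.ofReal (Real.exp (-s * (k : ℝ))) = (ENNReal.ofReal (Real.exp (-s)))^k := by
  rw [show -s * (k:ℝ) = (k:ℝ) * (-s) by ring, Real.exp_nat_mul,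
    ENNReal.ofReal_pow (Real.exp_nonneg _)]

section Dual
variable {X : Type*} [MeasurableSpace X] {μ : Measure X} {T : X → X}
  {hatT : (X → ℝ≥0∞) → (X → ℝ≥0∞)}

lemma hatT_iter_meas (hatTmeas : ∀ u, Measurable u → Measurable (hatT u))
    (n : ℕ) (u : X → ℝ≥0∞) (hu : Measurable u) : Measurable (hatT^[n] u) := by
  induction n generalizing u with
  | zero => exact hu
  | succ n ih => rw [Function.iterate_succ_apply]; exact ih _ (hatTmeas u hu)

lemma dual_iter (hT : Measurable T)
    (hatTmeas : ∀ u, Measurable u → Measurable (hatT u))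
    (hatTdual : ∀ u v : X → ℝ≥0∞, Measurable u → Measurable v →
      ∫⁻ x, v (T x) * u x ∂μ = ∫⁻ x, v x * hatT u x ∂μ)
    (n : ℕ) (u v : X → ℝ≥0∞) (hu : Measurable u) (hv : Measurable v) :
    ∫⁻ x, v (T^[n] x) * u x ∂μ = ∫⁻ x, v x * (hatT^[n] u) x ∂μ := by
  induction n generalizing u with
  | zero => simp
  | succ n ih =>
    have h1 : ∫⁻ x, v (T^[n+1] x) * u x ∂μ
        = ∫⁻ x, (fun y => v (T^[n] y)) (T x) * u x ∂μ := by
      refine lintegral_congr fun x => ?_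
      rw [Function.iterate_succ_apply]
    rw [h1, hatTdual u (fun y => v (T^[n] y)) hu (hv.comp (hT.iterate n)),
      Function.iterate_succ_apply]
    exact ih (hatT u) (hatTmeas u hu)

end Dual







/-- points hitting `Y` within time `j` (including time `0`). -/
def ES {X : Type*} (T : X → X) (Y : Set X) (j : ℕ) : Set X :=
  {x | ∃ k, k ≤ j ∧ T^[k] x ∈ Y}

section ESL
variable {X : Type*} {T : X → X} {Y : Set X} {x : X}

lemma Y_subset_ES (j : ℕ) : Y ⊆ ES T Y j := fun x hx => ⟨0, by omega, by simpa⟩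

lemma ES_succ (j : ℕ) : ES T Y (j+1) = (T ⁻¹' ES T Y j) ∪ Y := by
  ext x
  simp only [ES, Set.mem_union, Set.mem_preimage, Set.mem_setOf_eq]
  constructor
  · rintro ⟨k, hk, hky⟩
    rcases Nat.eq_zero_or_pos k with rfl | hk1
    · right; simpa using hky
    · left
      obtain ⟨m, rfl⟩ : ∃ m, k = m + 1 := ⟨k - 1, by omega⟩
      exact ⟨m, by omega, by rwa [Function.iterate_succ_apply] at hky⟩
  · rintro (⟨k, hk, hky⟩ | hx)
    · exact ⟨k+1, by omega, by rwa [Function.iterate_succ_apply]⟩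
    · exact ⟨0, by omega, by simpa⟩

lemma measurableSet_ES [MeasurableSpace X] (hT : Measurable T) (hY : MeasurableSet Y)
    (j : ℕ) : MeasurableSet (ES T Y j) := by
  have : ES T Y j = ⋃ (k : ℕ), ⋃ (_ : k ≤ j), T^[k] ⁻¹' Y := by
    ext x; simp [ES]
  rw [this]
  exact MeasurableSet.iUnion fun k => MeasurableSet.iUnion fun _ => hY.preimage (hT.iterate k)

end ESL

section Decomp
variable {X : Type*} {T : X → X} {Y : Set X} {x : X}

lemma mem_preimage_ES_iff {j : ℕ} :
    T x ∈ ES T Y j ↔ firstReturn T Y x ≤ ((j+1 : ℕ) : ℕ∞) := by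
  rw [firstReturn_le_iff]
  constructor
  · rintro ⟨k, hk, hky⟩
    exact ⟨k+1, by omega, by omega, by rwa [Function.iterate_succ_apply]⟩
  · rintro ⟨k, h1, h2, h3⟩
    obtain ⟨m, rfl⟩ : ∃ m, k = m + 1 := ⟨k - 1, by omega⟩
    exact ⟨m, by omega, by rwa [Function.iterate_succ_apply] at h3⟩

lemma ES_succ_decomp (j : ℕ) :
    ES T Y (j+1) =
      (T ⁻¹' ES T Y j) ∪ (Y ∩ {x | ((j+1 : ℕ) : ℕ∞) < firstReturn T Y x}) := by
  rw [ES_succ]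
  ext x
  simp only [Set.mem_union, Set.mem_preimage, Set.mem_inter_iff, Set.mem_setOf_eq]
  by_cases h : T x ∈ ES T Y j
  · simp [h]
  · simp only [h, false_or]
    rw [mem_preimage_ES_iff, not_le] at h
    exact ⟨fun hx => ⟨hx, h⟩, fun hx => hx.1⟩

lemma ES_succ_disjoint (j : ℕ) :
    Disjoint (T ⁻¹' ES T Y j) (Y ∩ {x | ((j+1 : ℕ) : ℕ∞) < firstReturn T Y x}) := by
  rw [Set.disjoint_left]
  rintro x hx ⟨-, hx2⟩
  rw [Set.mem_preimage, mem_preimage_ES_iff] at hx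
  exact absurd hx (not_le.2 hx2)

lemma ES_decomp (j : ℕ) :
    ES T Y j = Y ∪ ⋃ n ∈ Finset.range j, Ypart T Y (n+1) := by
  ext x
  simp only [Set.mem_union, Set.mem_iUnion, Finset.mem_range, exists_prop]
  constructor
  · rintro ⟨k, hk, hky⟩
    by_cases hxY : x ∈ Y
    · exact Or.inl hxY
    · right
      have hk1 : 1 ≤ k := by
        rcases Nat.eq_zero_or_pos k with rfl | h; · exact absurd (by simpa using hky) hxY
        · omega
      have hle : firstReturn T Y x ≤ (j : ℕ∞) := firstReturn_le_iff.2 ⟨k, hk1, hk, hky⟩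
      have hne : firstReturn T Y x ≠ ⊤ := by
        intro h; rw [h] at hle; exact absurd (top_le_iff.1 (le_trans le_top hle)) (by simp)
      obtain ⟨m, hm0⟩ := WithTop.ne_top_iff_exists.1 hne
      have hm : firstReturn T Y x = ((m : ℕ) : ℕ∞) := by exact_mod_cast hm0.symm
      have hm1 : 1 ≤ m := by
        have h2 := firstReturn_pos (T := T) (Y := Y) (x := x)
        rw [hm] at h2
        have h3 : 0 < m := by exact_mod_cast h2
        omega
      have hmj : m ≤ j := by
        rw [hm] at hle
        exact_mod_cast hle
      obtain ⟨n, rfl⟩ : ∃ n, m = n + 1 := ⟨m - 1, by omega⟩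
      exact ⟨n, by omega, hxY, hm⟩
  · rintro (h | ⟨n, hn, h⟩)
    · exact ⟨0, by omega, by simpa⟩
    · exact ⟨n+1, by omega, (mem_Ypart_succ.1 h).2.1⟩

lemma occ_eq_zero_of_fr {j : ℕ} (h : (j : ℕ∞) < firstReturn T Y x) :
    occTime T Y j x = 0 := by
  refine occTime_eq_zero j fun k hk1 hk2 hky => ?_
  have := le_trans (firstReturn_le hk1 hky) (by exact_mod_cast hk2 : (k:ℕ∞) ≤ (j:ℕ∞))
  exact absurd this (not_le.2 h)

lemma occ_Ypart_zero {n m : ℕ} (hx : x ∈ Ypart T Y (n+1)) (hm : m ≤ n) :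
    occTime T Y m x = 0 :=
  occTime_eq_zero m fun k _ hk2 => (mem_Ypart_succ.1 hx).2.2 k (by omega)

lemma occ_Ypart_split {n m : ℕ} (hx : x ∈ Ypart T Y (n+1)) :
    occTime T Y ((n+1) + m) x = 1 + occTime T Y m (T^[n+1] x) := by
  rw [occTime_add (n+1) m]
  congr 1
  rw [occTime_add n 1, occ_Ypart_zero hx le_rfl, occTime_one]
  have h1 : T (T^[n] x) = T^[n+1] x := (Function.iterate_succ_apply' T n x).symm
  have h2 : Y.indicator (fun _ => (1:ℕ)) (T^[n+1] x) = 1 :=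
    Set.indicator_of_mem (mem_Ypart_succ.1 hx).2.1 _
  rw [h1, h2]

end Decomp

section Meas
variable {X : Type*} [MeasurableSpace X] {μ : Measure X} {T : X → X} {Y : Set X} {B : ℝ≥0∞}

lemma measurable_bS (hT : Measurable T) (hYm : MeasurableSet Y) (j : ℕ) :
    Measurable fun x => B ^ occTime T Y j x :=
  (measurable_from_top (f := fun n : ℕ => B ^ n)).comp (measurable_occTime hT hYm j)

lemma measurableSet_fr_gt (hT : Measurable T) (hYm : MeasurableSet Y) (j : ℕ) :
    MeasurableSet {x | (j : ℕ∞) < firstReturn T Y x} := by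
  have : {x | (j : ℕ∞) < firstReturn T Y x}
      = (⋃ (k : ℕ), ⋃ (_ : 1 ≤ k ∧ k ≤ j), T^[k] ⁻¹' Y)ᶜ := by
    ext x
    rw [Set.mem_setOf_eq, Set.mem_compl_iff, ← not_le, firstReturn_le_iff]
    constructor
    · intro h hmem
      obtain ⟨k, hk⟩ := Set.mem_iUnion.1 hmem
      obtain ⟨⟨hk1, hk2⟩, hky⟩ := Set.mem_iUnion.1 hk
      exact h ⟨k, hk1, hk2, Set.mem_preimage.1 hky⟩
    · rintro h ⟨k, hk1, hk2, hky⟩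
      exact h (Set.mem_iUnion.2 ⟨k, Set.mem_iUnion.2 ⟨⟨hk1, hk2⟩, Set.mem_preimage.2 hky⟩⟩)
  rw [this]
  exact (MeasurableSet.iUnion fun k => MeasurableSet.iUnion fun _ =>
    hYm.preimage (hT.iterate k)).compl

lemma disjoint_Y_biUnion {j : ℕ} :
    Disjoint Y (⋃ n ∈ Finset.range j, Ypart T Y (n+1)) := by
  rw [Set.disjoint_left]
  intro x hx hx2
  simp only [Set.mem_iUnion] at hx2
  obtain ⟨n, -, hn⟩ := hx2
  exact (mem_Ypart_succ.1 hn).1 hx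

lemma e_split (hT : Measurable T) (hYm : MeasurableSet Y) (j : ℕ) :
    ∫⁻ x in ES T Y j, B ^ occTime T Y j x ∂μ
      = (∫⁻ x in Y, B ^ occTime T Y j x ∂μ)
        + ∑ n ∈ Finset.range j, ∫⁻ x in Ypart T Y (n+1), B ^ occTime T Y j x ∂μ := by
  rw [ES_decomp j,
    lintegral_union (Finset.measurableSet_biUnion _
      (fun n _ => measurableSet_Ypart hT hYm (n+1))) disjoint_Y_biUnion,
    lintegral_biUnion_finset
      (fun m _ n _ hmn => Ypart_disjoint (by omega))
      (fun n _ => measurableSet_Ypart hT hYm (n+1))]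

lemma gY_le (hB : B ≤ 1) (j : ℕ) :
    ∫⁻ x in Y, B ^ occTime T Y j x ∂μ ≤ μ Y :=
  le_trans (lintegral_mono fun x => pow_le_one' hB _) (by rw [setLIntegral_one])

lemma gP_le (hTmp : MeasurePreserving T μ μ) (hYm : MeasurableSet Y)
    (hB : B ≤ 1) (n j : ℕ) :
    ∫⁻ x in Ypart T Y n, B ^ occTime T Y j x ∂μ ≤ μ Y := by
  refine le_trans (lintegral_mono fun x => pow_le_one' hB _) ?_
  rw [setLIntegral_one]
  calc μ (Ypart T Y n) ≤ μ (T^[n] ⁻¹' Y) := measure_mono (Ypart_subset_iter_preimage n)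
    _ = μ Y := (hTmp.iterate n).measure_preimage hYm.nullMeasurableSet

lemma e_bound (hTmp : MeasurePreserving T μ μ) (hYm : MeasurableSet Y)
    (hB : B ≤ 1) (j : ℕ) :
    ∫⁻ x in ES T Y j, B ^ occTime T Y j x ∂μ ≤ ((j:ℝ≥0∞) + 1) * μ Y := by
  rw [e_split hTmp.measurable hYm j]
  have h1 : ∑ n ∈ Finset.range j, ∫⁻ x in Ypart T Y (n+1), B ^ occTime T Y j x ∂μ
      ≤ (j : ℝ≥0∞) * μ Y := by
    calc ∑ n ∈ Finset.range j, ∫⁻ x in Ypart T Y (n+1), B ^ occTime T Y j x ∂μ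
        ≤ ∑ _n ∈ Finset.range j, μ Y :=
          Finset.sum_le_sum fun n _ => gP_le hTmp hYm hB (n+1) j
      _ = (j : ℝ≥0∞) * μ Y := by simp [Finset.sum_const, nsmul_eq_mul]
  calc _ ≤ μ Y + (j : ℝ≥0∞) * μ Y := add_le_add (gY_le hB j) h1
    _ = ((j:ℝ≥0∞) + 1) * μ Y := by ring

lemma e_rec (hTmp : MeasurePreserving T μ μ) (hYm : MeasurableSet Y)
    (hB : B ≤ 1) (j : ℕ) :
    (∫⁻ x in ES T Y (j+1), B ^ occTime T Y (j+1) x ∂μ)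
        + (1 - B) * ∫⁻ x in Y, B ^ occTime T Y j x ∂μ
      = (∫⁻ x in ES T Y j, B ^ occTime T Y j x ∂μ)
        + μ (Y ∩ {x | ((j+1 : ℕ) : ℕ∞) < firstReturn T Y x}) := by
  have hT := hTmp.measurable
  have hq_meas : MeasurableSet (Y ∩ {x | ((j+1 : ℕ) : ℕ∞) < firstReturn T Y x}) :=
    hYm.inter (measurableSet_fr_gt hT hYm (j+1))
  have hES := measurableSet_ES hT hYm j
  -- the auxiliary function F
  set F : X → ℝ≥0∞ := fun y => (ES T Y j).indicator
    (fun y => B ^ (Y.indicator (fun _ => (1:ℕ)) y + occTime T Y j y)) y with hF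
  have hFmeas : Measurable F := by
    refine Measurable.indicator ?_ hES
    exact (measurable_from_top (f := fun n : ℕ => B ^ n)).comp
      (((measurable_const.indicator hYm)).add (measurable_occTime hT hYm j))
  -- split the integral over ES (j+1)
  rw [ES_succ_decomp j, lintegral_union hq_meas (ES_succ_disjoint j)]
  -- the q-part
  have hq : ∫⁻ x in Y ∩ {x | ((j+1 : ℕ) : ℕ∞) < firstReturn T Y x},
      B ^ occTime T Y (j+1) x ∂μ
      = μ (Y ∩ {x | ((j+1 : ℕ) : ℕ∞) < firstReturn T Y x}) := by
    rw [setLIntegral_congr_fun hq_meas (fun x hx => ?_), setLIntegral_one]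
    rw [occ_eq_zero_of_fr hx.2, pow_zero]
  -- the preimage part
  have hpre : ∫⁻ x in T ⁻¹' ES T Y j, B ^ occTime T Y (j+1) x ∂μ
      = ∫⁻ x, F (T x) ∂μ := by
    rw [← lintegral_indicator (hES.preimage hT)]
    refine lintegral_congr fun x => ?_
    by_cases hTx : T x ∈ ES T Y j
    · simp only [hF, Set.indicator_of_mem (Set.mem_preimage.2 hTx),
        Set.indicator_of_mem hTx]
      rw [occTime_succ']
    · simp only [hF, Set.indicator_of_notMem (fun h => hTx (Set.mem_preimage.1 h)),
        Set.indicator_of_notMem hTx]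
  have hcomp : ∫⁻ x, F (T x) ∂μ = ∫⁻ x, F x ∂μ := hTmp.lintegral_comp hFmeas
  -- the key pointwise identity
  have hpt : ∀ y, F y + (1 - B) * Y.indicator (fun y => B ^ occTime T Y j y) y
      = (ES T Y j).indicator (fun y => B ^ occTime T Y j y) y := by
    intro y
    by_cases hy : y ∈ Y
    · have hyE : y ∈ ES T Y j := Y_subset_ES j hy
      rw [hF]
      simp only [Set.indicator_of_mem hyE, Set.indicator_of_mem hy]
      rw [pow_add, pow_one]
      rw [← add_mul, add_tsub_cancel_of_le hB, one_mul]
    · by_cases hyE : y ∈ ES T Y j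
      · rw [hF]
        simp only [Set.indicator_of_mem hyE, Set.indicator_of_notMem hy]
        simp
      · rw [hF]
        simp only [Set.indicator_of_notMem hyE, Set.indicator_of_notMem hy]
        simp
  have hsum : ∫⁻ x, F x ∂μ + (1 - B) * ∫⁻ x in Y, B ^ occTime T Y j x ∂μ
      = ∫⁻ x in ES T Y j, B ^ occTime T Y j x ∂μ := by
    rw [← lintegral_indicator hYm, ← lintegral_indicator hES,
      ← lintegral_const_mul _ ((measurable_bS hT hYm j).indicator hYm),
      ← lintegral_add_left hFmeas]
    exact lintegral_congr hpt
  rw [hq, hpre, hcomp, add_right_comm, hsum]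

end Meas

lemma final_alg {A B GY C : ℝ≥0∞} (hA : A ≤ 1) (hB : B ≤ 1) :
    A * (GY + C) + ((1 - B) * GY + (1 - A) * (B * GY + C))
      = (GY + C) + (1 - B) * (A * GY) := by
  have hAne : A ≠ ⊤ := ne_top_of_le_ne_top ENNReal.one_ne_top hA
  have hBne : B ≠ ⊤ := ne_top_of_le_ne_top ENNReal.one_ne_top hB
  have h2 : (1 - A) * B = B - A * B := by
    rw [ENNReal.sub_mul (fun _ _ => hBne), one_mul]
  have h3 : (1 - B) * A = A - B * A := by
    rw [ENNReal.sub_mul (fun _ _ => hAne), one_mul]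
  have hAB1 : A * B ≤ 1 := le_trans (mul_le_of_le_one_left' hA) hB
  have hABB : A * B ≤ B := mul_le_of_le_one_left' hA
  have hBAA : B * A ≤ A := mul_le_of_le_one_left' hB
  have hcoef1 : A + (1 - A) = 1 := add_tsub_cancel_of_le hA
  calc A * (GY + C) + ((1 - B) * GY + (1 - A) * (B * GY + C))
      = (A + ((1 - B) + (1 - A) * B)) * GY + (A + (1 - A)) * C := by ring
    _ = (A + (1 - A * B)) * GY + C := by
        rw [h2, tsub_add_tsub_cancel hB hABB, hcoef1, one_mul]
    _ = (1 + (A - B * A)) * GY + C := by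
        have hABne : A * B ≠ ⊤ := ENNReal.mul_ne_top hAne hBne
        have hBAne : B * A ≠ ⊤ := ENNReal.mul_ne_top hBne hAne
        have e1 : A + (1 - A * B) = 1 + A - A * B := by
          rw [add_comm, ENNReal.sub_add_eq_add_sub hAB1 hABne]
        have e2 : 1 + (A - B * A) = A + 1 - B * A := by
          rw [add_comm, ENNReal.sub_add_eq_add_sub hBAA hBAne]
        rw [e1, e2, add_comm A 1, mul_comm A B]
    _ = (GY + C) + (1 - B) * (A * GY) := by
        rw [← mul_assoc, h3]
        ring

lemma tsum_mul_geo_ne_top {α : ℝ} (h0 : 0 ≤ α) (h1 : α < 1) :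
    (∑' j : ℕ, ((j : ℝ≥0∞) + 1) * (ENNReal.ofReal α) ^ j) ≠ ⊤ := by
  have hterm : ∀ j : ℕ, ((j : ℝ≥0∞) + 1) * (ENNReal.ofReal α) ^ j
      = ENNReal.ofReal (((j : ℝ) + 1) * α ^ j) := by
    intro j
    rw [ENNReal.ofReal_mul (by positivity), ← ENNReal.ofReal_pow h0]
    congr 1
    rw [ENNReal.ofReal_add (by positivity) zero_le_one]
    simp
  have hsum : Summable fun j : ℕ => ((j : ℝ) + 1) * α ^ j := by
    have hnorm : ‖α‖ < 1 := by rw [Real.norm_eq_abs, abs_of_nonneg h0]; exact h1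
    have h2 := summable_pow_mul_geometric_of_norm_lt_one 1 hnorm
    have h3 := summable_geometric_of_norm_lt_one hnorm
    refine Summable.congr (h2.add h3) fun j => ?_
    push_cast
    ring
  rw [tsum_congr hterm, ← ENNReal.ofReal_tsum_of_nonneg (fun j => by positivity) hsum]
  exact ENNReal.ofReal_ne_top
set_option maxHeartbeats 1000000 in
theorem key {X : Type*} [MeasurableSpace X] {μ : Measure X} {T : X → X}
    (hTmp : MeasurePreserving T μ μ) {Y : Set X} (hYm : MeasurableSet Y) (hY1 : μ Y < ⊤)
    (hatT : (X → ℝ≥0∞) → (X → ℝ≥0∞))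
    (hatTmeas : ∀ u, Measurable u → Measurable (hatT u))
    (hatTdual : ∀ u v : X → ℝ≥0∞, Measurable u → Measurable v →
      ∫⁻ x, v (T x) * u x ∂μ = ∫⁻ x, v x * hatT u x ∂μ)
    {A B : ℝ≥0∞} (hA : A < 1) (hB : B ≤ 1) :
    (1 - B) * (∫⁻ x in Y, ∑' n : ℕ, A ^ n * B ^ occTime T Y n x ∂μ) +
      (1 - A) * B * (∫⁻ x in Y,
        (∑' n : ℕ, A ^ n * B ^ occTime T Y n x) *
        (∑' n : ℕ, A ^ n * (hatT^[n] ((Ypart T Y n).indicator fun _ => (1:ℝ≥0∞))) x) ∂μ)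
      = ∑' n : ℕ, A ^ n * μ (Y ∩ {x | (n : ℕ∞) < firstReturn T Y x}) := by
  have hT : Measurable T := hTmp.measurable
  have hA1 : A ≤ 1 := hA.le
  have hbSmeas : ∀ j, Measurable fun x => B ^ occTime T Y j x :=
    fun j => measurable_bS hT hYm j
  set G : X → ℝ≥0∞ := fun x => ∑' n : ℕ, A ^ n * B ^ occTime T Y n x with hGdef
  have hGmeas : Measurable G := Measurable.ennreal_tsum fun n => (hbSmeas n).const_mul _
  set g : ℕ → ℝ≥0∞ := fun j => ∫⁻ x in Y, B ^ occTime T Y j x ∂μ with hgdef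
  set e : ℕ → ℝ≥0∞ := fun j => ∫⁻ x in ES T Y j, B ^ occTime T Y j x ∂μ with hedef
  set q : ℕ → ℝ≥0∞ := fun j => μ (Y ∩ {x | (j : ℕ∞) < firstReturn T Y x}) with hqdef
  set c : ℕ → ℝ≥0∞ := fun j =>
    ∑ n ∈ Finset.range j, ∫⁻ x in Ypart T Y (n+1), B ^ occTime T Y j x ∂μ with hcdef
  have humeas : ∀ n, Measurable (hatT^[n] ((Ypart T Y n).indicator fun _ => (1:ℝ≥0∞))) :=
    fun n => hatT_iter_meas hatTmeas n _
      (measurable_const.indicator (measurableSet_Ypart hT hYm n))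
  -- G over Y
  have hGY : ∫⁻ x in Y, G x ∂μ = ∑' j, A ^ j * g j := by
    rw [hGdef]
    rw [lintegral_tsum (fun n => ((hbSmeas n).const_mul _).aemeasurable)]
    exact tsum_congr fun n => lintegral_const_mul _ (hbSmeas n)
  -- second integral : reduction to J
  set J : ℕ → ℝ≥0∞ := fun n => ∫⁻ x in Ypart T Y n, Set.indicator Y G (T^[n] x) ∂μ with hJdef
  have hsplit2 : ∫⁻ x in Y, G x *
      (∑' n : ℕ, A ^ n * (hatT^[n] ((Ypart T Y n).indicator fun _ => (1:ℝ≥0∞))) x) ∂μ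
      = ∑' n, A ^ n * J n := by
    have h1 : ∀ x, G x *
        (∑' n : ℕ, A ^ n * (hatT^[n] ((Ypart T Y n).indicator fun _ => (1:ℝ≥0∞))) x)
        = ∑' n : ℕ, A ^ n *
            (G x * (hatT^[n] ((Ypart T Y n).indicator fun _ => (1:ℝ≥0∞))) x) := by
      intro x
      rw [← ENNReal.tsum_mul_left]
      exact tsum_congr fun n => by ring
    rw [lintegral_congr h1,
      lintegral_tsum (f := fun n x => A ^ n * (G x * (hatT^[n] ((Ypart T Y n).indicator fun _ => (1:ℝ≥0∞))) x))
        (fun n => ((hGmeas.mul (humeas n)).const_mul _).aemeasurable)]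
    refine tsum_congr fun n => ?_
    rw [lintegral_const_mul (f := fun x => G x * (hatT^[n] ((Ypart T Y n).indicator fun _ => (1:ℝ≥0∞))) x) _ (hGmeas.mul (humeas n))]
    congr 1
    rw [← lintegral_indicator hYm]
    have h2 : ∀ x, Y.indicator (fun x => G x *
        (hatT^[n] ((Ypart T Y n).indicator fun _ => (1:ℝ≥0∞))) x) x
        = Set.indicator Y G x * (hatT^[n] ((Ypart T Y n).indicator fun _ => (1:ℝ≥0∞))) x := by
      intro x
      by_cases hx : x ∈ Y <;> simp [hx]
    rw [lintegral_congr h2,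
      ← dual_iter hT hatTmeas hatTdual n _ _
        (measurable_const.indicator (measurableSet_Ypart hT hYm n)) (hGmeas.indicator hYm),
      show J n = ∫⁻ x in Ypart T Y n, Set.indicator Y G (T^[n] x) ∂μ from rfl,
      ← lintegral_indicator (measurableSet_Ypart hT hYm n)]
    refine lintegral_congr fun x => ?_
    by_cases hx : x ∈ Ypart T Y n <;>
      simp [hx, Set.indicator_of_mem, Set.indicator_of_notMem]
  have hJ0 : J 0 = ∫⁻ x in Y, G x ∂μ := by
    show ∫⁻ x in Y, Set.indicator Y G (T^[0] x) ∂μ = ∫⁻ x in Y, G x ∂μ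
    refine setLIntegral_congr_fun hYm fun x hx => ?_
    simp [Set.indicator_of_mem hx]
  set WW : ℕ → ℕ → ℝ≥0∞ := fun n j =>
    if n ≤ j then A ^ j * ∫⁻ x in Ypart T Y n, B ^ occTime T Y j x ∂μ else 0 with hWWdef
  have hJsucc : ∀ n, B * (A ^ (n+1) * J (n+1)) = ∑' j, WW (n+1) j := by
    intro n
    have hmeasP := measurableSet_Ypart hT hYm (n+1)
    have hvmeas : Measurable fun x => Set.indicator Y G (T^[n+1] x) :=
      (hGmeas.indicator hYm).comp (hT.iterate (n+1))
    have hptw : ∀ x ∈ Ypart T Y (n+1),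
        B * (A ^ (n+1) * Set.indicator Y G (T^[n+1] x))
          = ∑' m, A ^ ((n+1) + m) * B ^ occTime T Y ((n+1) + m) x := by
      intro x hx
      have hTY : T^[n+1] x ∈ Y := (mem_Ypart_succ.1 hx).2.1
      rw [Set.indicator_of_mem hTY, hGdef]
      rw [← ENNReal.tsum_mul_left, ← ENNReal.tsum_mul_left]
      refine tsum_congr fun m => ?_
      rw [occ_Ypart_split hx, pow_add A (n+1) m, pow_add B 1 (occTime T Y m (T^[n+1] x)),
        pow_one]
      ring
    have hstep : B * (A ^ (n+1) * J (n+1))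
        = ∑' m, A ^ ((n+1) + m) * ∫⁻ x in Ypart T Y (n+1), B ^ occTime T Y ((n+1)+m) x ∂μ := by
      show B * (A ^ (n+1) * (∫⁻ x in Ypart T Y (n+1), Set.indicator Y G (T^[n+1] x) ∂μ)) = _
      rw [← lintegral_const_mul _ hvmeas, ← lintegral_const_mul _ (hvmeas.const_mul _)]
      rw [setLIntegral_congr_fun hmeasP hptw]
      rw [lintegral_tsum (fun m => ((hbSmeas _).const_mul _).aemeasurable)]
      exact tsum_congr fun m => lintegral_const_mul _ (hbSmeas _)
    rw [hstep]
    rw [← ENNReal.summable.sum_add_tsum_nat_add' (k := n+1) (f := WW (n+1))]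
    have h0 : ∑ i ∈ Finset.range (n+1), WW (n+1) i = 0 :=
      Finset.sum_eq_zero fun i hi => by
        simp only [hWWdef]
        exact if_neg (by simp at hi; omega)
    rw [h0, zero_add]
    refine tsum_congr fun m => ?_
    simp only [hWWdef]
    rw [if_pos (by omega : n + 1 ≤ m + (n+1)), add_comm m (n+1)]
  have hBI2 : B * (∫⁻ x in Y, G x *
      (∑' n : ℕ, A ^ n * (hatT^[n] ((Ypart T Y n).indicator fun _ => (1:ℝ≥0∞))) x) ∂μ)
      = B * (∫⁻ x in Y, G x ∂μ) + ∑' j, A ^ j * c j := by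
    rw [hsplit2, ← ENNReal.tsum_mul_left, tsum_eq_zero_add' ENNReal.summable]
    have h00 : B * (A ^ 0 * J 0) = B * (∫⁻ x in Y, G x ∂μ) := by rw [hJ0]; ring
    rw [h00]
    congr 1
    calc ∑' n, B * (A ^ (n+1) * J (n+1)) = ∑' n, ∑' j, WW (n+1) j :=
          tsum_congr fun n => hJsucc n
      _ = ∑' j, ∑' n, WW (n+1) j := ENNReal.tsum_comm
      _ = ∑' j, A ^ j * c j := by
          refine tsum_congr fun j => ?_
          have h1 : ∑' n, WW (n+1) j
              = ∑ n ∈ Finset.range j, WW (n+1) j := by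
            refine tsum_eq_sum fun n hn => ?_
            simp only [hWWdef]
            exact if_neg (by simp at hn; omega)
          rw [h1, hcdef]
          rw [Finset.mul_sum]
          refine Finset.sum_congr rfl fun n hn => ?_
          simp only [hWWdef]
          rw [if_pos (by simp at hn; omega)]
  -- e-series facts
  have hEsplit : ∀ j, e j = g j + c j := fun j => e_split hT hYm j
  have hge_le : ∀ j, g j ≤ μ Y := fun j => gY_le hB j
  have hGYfin : (∑' j, A ^ j * g j) ≠ ⊤ := by
    have hle : (∑' j, A ^ j * g j) ≤ (∑' j : ℕ, A ^ j) * μ Y := by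
      rw [← ENNReal.tsum_mul_right]
      exact ENNReal.tsum_le_tsum fun j => mul_le_mul_right (hge_le j) _
    refine ne_top_of_le_ne_top ?_ hle
    refine ENNReal.mul_ne_top ?_ hY1.ne
    rw [ENNReal.tsum_geometric]
    refine ENNReal.inv_ne_top.2 ?_
    intro h
    exact absurd (tsub_eq_zero_iff_le.1 h) (not_le.2 hA)
  have hEfin : (∑' j, A ^ j * e j) ≠ ⊤ := by
    have hle : (∑' j, A ^ j * e j) ≤ (∑' j : ℕ, ((j:ℝ≥0∞)+1) * A ^ j) * μ Y := by
      rw [← ENNReal.tsum_mul_right]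
      refine ENNReal.tsum_le_tsum fun j => ?_
      calc A ^ j * e j ≤ A ^ j * (((j:ℝ≥0∞)+1) * μ Y) :=
            mul_le_mul_right (e_bound hTmp hYm hB j) _
        _ = ((j:ℝ≥0∞)+1) * A ^ j * μ Y := by ring
    refine ne_top_of_le_ne_top (ENNReal.mul_ne_top ?_ hY1.ne) hle
    have hAform : A = ENNReal.ofReal A.toReal := (ENNReal.ofReal_toReal (hA.trans ENNReal.one_lt_top).ne).symm
    have hAlt : A.toReal < 1 := by
      rw [← ENNReal.toReal_one]
      exact ENNReal.toReal_strict_mono ENNReal.one_ne_top hA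
    rw [hAform]
    exact tsum_mul_geo_ne_top ENNReal.toReal_nonneg hAlt
  -- telescoping
  have hrec : ∀ j, A ^ (j+1) * e (j+1) + ((1-B) * A) * (A ^ j * g j)
      = A * (A ^ j * e j) + A ^ (j+1) * q (j+1) := by
    intro j
    have h := e_rec (μ := μ) hTmp hYm hB j
    calc A ^ (j+1) * e (j+1) + ((1-B) * A) * (A ^ j * g j)
        = A ^ (j+1) * (e (j+1) + (1-B) * g j) := by ring
      _ = A ^ (j+1) * (e j + q (j+1)) := by rw [h]
      _ = A * (A ^ j * e j) + A ^ (j+1) * q (j+1) := by ring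
  have hsumrec : (∑' j, A ^ (j+1) * e (j+1)) + ((1-B) * A) * (∑' j, A ^ j * g j)
      = A * (∑' j, A ^ j * e j) + ∑' j, A ^ (j+1) * q (j+1) := by
    rw [← ENNReal.tsum_mul_left, ← ENNReal.tsum_mul_left (a := A), ← ENNReal.tsum_add,
      ← ENNReal.tsum_add]
    exact tsum_congr hrec
  have hEv0 : (∑' j, A ^ j * e j) = e 0 + ∑' j, A ^ (j+1) * e (j+1) := by
    rw [tsum_eq_zero_add' ENNReal.summable, pow_zero, one_mul]
  have hQv0 : (∑' j, A ^ j * q j) = q 0 + ∑' j, A ^ (j+1) * q (j+1) := by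
    rw [tsum_eq_zero_add' ENNReal.summable, pow_zero, one_mul]
  have hES0 : ES T Y 0 = Y := by
    ext x
    simp [ES, Nat.le_zero]
  have he0 : e 0 = μ Y := by
    rw [hedef]
    simp only [hES0]
    have : ∀ x, B ^ occTime T Y 0 x = 1 := fun x => by rw [occTime_zero, pow_zero]
    rw [lintegral_congr this, setLIntegral_one]
  have hq0 : q 0 = μ Y := by
    rw [hqdef]
    simp only
    congr 1
    ext x
    simp only [Set.mem_inter_iff, Set.mem_setOf_eq, Nat.cast_zero]
    exact ⟨fun h => h.1, fun h => ⟨h, firstReturn_pos⟩⟩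
  have hEvsplit : (∑' j, A ^ j * e j) = (∑' j, A ^ j * g j) + ∑' j, A ^ j * c j := by
    rw [← ENNReal.tsum_add]
    exact tsum_congr fun j => by rw [hEsplit j, mul_add]
  have hkey : A * (∑' j, A ^ j * e j) + (∑' j, A ^ j * q j)
      = (∑' j, A ^ j * e j) + (1-B) * (A * (∑' j, A ^ j * g j)) := by
    calc A * (∑' j, A ^ j * e j) + (∑' j, A ^ j * q j)
        = A * (∑' j, A ^ j * e j) + (q 0 + ∑' j, A ^ (j+1) * q (j+1)) := by rw [hQv0]
      _ = q 0 + (A * (∑' j, A ^ j * e j) + ∑' j, A ^ (j+1) * q (j+1)) := by ring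
      _ = q 0 + ((∑' j, A ^ (j+1) * e (j+1)) + ((1-B) * A) * (∑' j, A ^ j * g j)) := by
          rw [hsumrec]
      _ = (e 0 + ∑' j, A ^ (j+1) * e (j+1)) + ((1-B) * A) * (∑' j, A ^ j * g j) := by
          rw [he0, hq0]; ring
      _ = (∑' j, A ^ j * e j) + (1-B) * (A * (∑' j, A ^ j * g j)) := by
          rw [← hEv0]; ring
  -- final assembly
  have hq_tsum : (∑' n : ℕ, A ^ n * μ (Y ∩ {x | (n : ℕ∞) < firstReturn T Y x}))
      = ∑' j, A ^ j * q j := by rw [hqdef]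
  rw [hq_tsum]
  have hAEfin : A * (∑' j, A ^ j * e j) ≠ ⊤ :=
    ENNReal.mul_ne_top (hA.trans ENNReal.one_lt_top).ne hEfin
  refine (ENNReal.add_right_inj hAEfin).1 ?_
  calc A * (∑' j, A ^ j * e j) +
        ((1 - B) * (∫⁻ x in Y, G x ∂μ) +
          (1 - A) * B * (∫⁻ x in Y, G x *
            (∑' n : ℕ, A ^ n * (hatT^[n] ((Ypart T Y n).indicator fun _ => (1:ℝ≥0∞))) x) ∂μ))
      = A * ((∑' j, A ^ j * g j) + ∑' j, A ^ j * c j) +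
          ((1 - B) * (∑' j, A ^ j * g j) +
            (1 - A) * (B * (∑' j, A ^ j * g j) + ∑' j, A ^ j * c j)) := by
        rw [hEvsplit, hGY, mul_assoc (1-A) B, hBI2, hGY]
    _ = ((∑' j, A ^ j * g j) + ∑' j, A ^ j * c j) +
          (1 - B) * (A * (∑' j, A ^ j * g j)) := final_alg hA1 hB
    _ = (∑' j, A ^ j * e j) + (1-B) * (A * (∑' j, A ^ j * g j)) := by rw [← hEvsplit]
    _ = A * (∑' j, A ^ j * e j) + (∑' j, A ^ j * q j) := hkey.symm

/-- Double Laplace transform identity for the occupation time `S_n^Y`. -/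
theorem stmt5 {X : Type*} [MeasurableSpace X] {μ : Measure X} [SigmaFinite μ]
    {T : X → X} (hcons : Conservative T μ) (herg : Ergodic T μ)
    (hinf : μ Set.univ = ⊤) {Y : Set X} (hYm : MeasurableSet Y)
    (hY0 : 0 < μ Y) (hY1 : μ Y < ⊤)
    (hatT : (X → ℝ≥0∞) → (X → ℝ≥0∞))
    (hatTmeas : ∀ u, Measurable u → Measurable (hatT u))
    (hatTdual : ∀ u v : X → ℝ≥0∞, Measurable u → Measurable v →
      ∫⁻ x, v (T x) * u x ∂μ = ∫⁻ x, v x * hatT u x ∂μ)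
    (s1 s2 : ℝ) (hs1 : 0 < s1) (hs2 : 0 ≤ s2) :
    (1 - ENNReal.ofReal (Real.exp (-s2))) *
      (∫⁻ x in Y, ∑' n : ℕ, ENNReal.ofReal (Real.exp (-(n : ℝ) * s1)) *
        ENNReal.ofReal (Real.exp (-s2 * occTime T Y n x)) ∂μ) +
    (1 - ENNReal.ofReal (Real.exp (-s1))) * ENNReal.ofReal (Real.exp (-s2)) *
      (∫⁻ x in Y,
        (∑' n : ℕ, ENNReal.ofReal (Real.exp (-(n : ℝ) * s1)) *
          ENNReal.ofReal (Real.exp (-s2 * occTime T Y n x))) *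
        (∑' n : ℕ, ENNReal.ofReal (Real.exp (-(n : ℝ) * s1)) *
          (hatT^[n] ((Ypart T Y n).indicator fun _ => (1:ℝ≥0∞))) x) ∂μ)
    = QY T Y μ s1 := by
  have hTmp : MeasurePreserving T μ μ := herg.toMeasurePreserving
  set A := ENNReal.ofReal (Real.exp (-s1)) with hAdef
  set B := ENNReal.ofReal (Real.exp (-s2)) with hBdef
  have hA : A < 1 := by
    rw [hAdef]
    exact ENNReal.ofReal_lt_one.2 (by rw [Real.exp_lt_one_iff]; linarith)
  have hB : B ≤ 1 := by
    rw [hBdef]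
    exact ENNReal.ofReal_le_one.2 (by rw [Real.exp_le_one_iff]; linarith)
  have hk := key hTmp hYm hY1 hatT hatTmeas hatTdual hA hB
  have h1 : (∫⁻ x in Y, ∑' n : ℕ, ENNReal.ofReal (Real.exp (-(n : ℝ) * s1)) *
        ENNReal.ofReal (Real.exp (-s2 * occTime T Y n x)) ∂μ)
      = ∫⁻ x in Y, ∑' n : ℕ, A ^ n * B ^ occTime T Y n x ∂μ :=
    lintegral_congr fun x => tsum_congr fun n => by
      rw [ofReal_exp_neg_nat_mul, ofReal_exp_neg_mul_nat, hAdef, hBdef]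
  have h2 : (∫⁻ x in Y,
        (∑' n : ℕ, ENNReal.ofReal (Real.exp (-(n : ℝ) * s1)) *
          ENNReal.ofReal (Real.exp (-s2 * occTime T Y n x))) *
        (∑' n : ℕ, ENNReal.ofReal (Real.exp (-(n : ℝ) * s1)) *
          (hatT^[n] ((Ypart T Y n).indicator fun _ => (1:ℝ≥0∞))) x) ∂μ)
      = ∫⁻ x in Y,
        (∑' n : ℕ, A ^ n * B ^ occTime T Y n x) *
        (∑' n : ℕ, A ^ n * (hatT^[n] ((Ypart T Y n).indicator fun _ => (1:ℝ≥0∞))) x) ∂μ := by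
    refine lintegral_congr fun x => ?_
    congr 1
    · exact tsum_congr fun n => by
        rw [ofReal_exp_neg_nat_mul, ofReal_exp_neg_mul_nat, hAdef, hBdef]
    · exact tsum_congr fun n => by rw [ofReal_exp_neg_nat_mul, hAdef]
  have h3 : QY T Y μ s1
      = ∑' n : ℕ, A ^ n * μ (Y ∩ {x | (n : ℕ∞) < firstReturn T Y x}) := by
    unfold QY
    exact tsum_congr fun n => by rw [ofReal_exp_neg_nat_mul, hAdef]
  rw [h1, h2, h3]
  exact hk
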